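/- (Case $0<p<1$, sequence version, no independence.) Let $0<p<1$ and let $\{X_n, n\ge 1\}$ be a sequence of random vectors in a real separable Hilbert space $\mathcal{H}$ such that $\{\|X_n\|^p\}$ is uniformly integrable in the Cesàro sense, i.e., $\lim_{a\to\infty}\sup_{n\ge 1} n^{-1}\sum_{i=1}^n\mathbb{E}(\|X_i\|^p\mathbf{1}(\|X_i\|^p>a))=0$. Then $n^{-1/p}\max_{1\le k\le n}\|\sum_{i=1}^k X_i\|\to 0$ in $L_p$ as $n\to\infty$. -/

import Mathlib

open MeasureTheory Filter Finset

private lemma rpow_add_le_add_rpow_real {x y p : ℝ} (hx : 0 ≤ x) (hy : 0 ≤ y)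
    (hp : 0 ≤ p) (hp1 : p ≤ 1) : (x + y) ^ p ≤ x ^ p + y ^ p := by
  have h := NNReal.rpow_add_le_add_rpow x.toNNReal y.toNNReal hp hp1
  rw [← Real.toNNReal_add hx hy] at h
  have h2 : (((x + y).toNNReal ^ p : NNReal) : ℝ)
      ≤ ((x.toNNReal ^ p + y.toNNReal ^ p : NNReal) : ℝ) := mod_cast h
  simpa [NNReal.coe_rpow, Real.coe_toNNReal _ hx, Real.coe_toNNReal _ hy,
    Real.coe_toNNReal _ (add_nonneg hx hy)] using h2

private lemma sum_rpow_le_rpow_sum {ι : Type*} {s : Finset ι} {f : ι → ℝ} {p : ℝ}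
    (hp0 : 0 < p) (hp1 : p ≤ 1) (hf : ∀ i ∈ s, 0 ≤ f i) :
    (∑ i ∈ s, f i) ^ p ≤ ∑ i ∈ s, f i ^ p := by
  induction s using Finset.cons_induction with
  | empty => simp [Real.zero_rpow hp0.ne']
  | cons a s ha ih =>
    rw [Finset.sum_cons, Finset.sum_cons]
    have hfa := hf a (Finset.mem_cons_self a s)
    have hs : 0 ≤ ∑ i ∈ s, f i :=
      Finset.sum_nonneg fun i hi => hf i (Finset.mem_cons_of_mem hi)
    calc (f a + ∑ i ∈ s, f i) ^ p ≤ f a ^ p + (∑ i ∈ s, f i) ^ p :=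
          rpow_add_le_add_rpow_real hfa hs hp0.le hp1
      _ ≤ f a ^ p + ∑ i ∈ s, f i ^ p := by
          exact add_le_add_right (ih fun i hi => hf i (Finset.mem_cons_of_mem hi)) _

/-- Sequence version (0<p<1): if {‖X_n‖^p} is Cesàro uniformly integrable then the
normalized maximal partial sums converge to 0 in L_p; no dependence assumption. -/
theorem lp_convergence_maximal_sums_seq
    {Ω H : Type*} [MeasurableSpace Ω]
    [NormedAddCommGroup H] [InnerProductSpace ℝ H] [CompleteSpace H]
    [SecondCountableTopology H] [MeasurableSpace H] [BorelSpace H]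
    (P : Measure Ω) [IsProbabilityMeasure P]
    (p : ℝ) (hp0 : 0 < p) (hp1 : p < 1)
    (X : ℕ → Ω → H)
    (hmeas : ∀ i, Measurable (X i))
    (hint : ∀ i, Integrable (fun ω => ‖X i ω‖ ^ p) P)
    -- Cesàro uniform integrability of {‖X_n‖^p}
    (hUI : ∀ ε > (0 : ℝ), ∃ a : ℝ, 0 < a ∧ ∀ b ≥ a, ∀ n : ℕ, 1 ≤ n →
      (1 / (n : ℝ)) * ∑ i ∈ Finset.Icc 1 n,
        ∫ ω, Set.indicator {ω | b < ‖X i ω‖ ^ p} (fun ω => ‖X i ω‖ ^ p) ω ∂P ≤ ε) :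
    Tendsto (fun n : ℕ =>
        ∫ ω, ((((Finset.Icc 1 n).sup fun k =>
            ‖∑ i ∈ Finset.Icc 1 k, X i ω‖₊ : NNReal) : ℝ) /
          (n : ℝ) ^ (1 / p)) ^ p ∂P)
      atTop (nhds 0) := by
  have hpne : p ≠ 0 := hp0.ne'
  rw [Metric.tendsto_atTop]
  intro ε hε
  obtain ⟨a, ha, hbound⟩ := hUI (ε / 3) (by positivity)
  set c : ℝ := a ^ (1 / p) with hc
  have hcpos : 0 < c := Real.rpow_pos_of_pos ha _
  have hcp : c ^ p = a := by
    rw [hc, ← Real.rpow_mul ha.le, one_div, inv_mul_cancel₀ hpne, Real.rpow_one]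
  -- measurability of the truncation sets
  have hmeasN : ∀ i, Measurable fun ω => ‖X i ω‖ ^ p := fun i =>
    (Real.continuous_rpow_const hp0.le).measurable.comp ((hmeas i).norm)
  have hA : ∀ i : ℕ, MeasurableSet {ω | a < ‖X i ω‖ ^ p} := fun i =>
    measurableSet_lt measurable_const (hmeasN i)
  -- the tail tends to 0
  have hlim : Tendsto (fun n : ℕ => a * (n : ℝ) ^ (p - 1)) atTop (nhds 0) := by
    have h1 : Tendsto (fun x : ℝ => x ^ (p - 1)) atTop (nhds 0) := by
      have := tendsto_rpow_neg_atTop (show (0:ℝ) < 1 - p by linarith)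
      simpa [neg_sub] using this
    have h2 : Tendsto (fun n : ℕ => (n : ℝ) ^ (p - 1)) atTop (nhds 0) :=
      h1.comp tendsto_natCast_atTop_atTop
    simpa using h2.const_mul a
  obtain ⟨N0, hN0⟩ := eventually_atTop.1
    (hlim.eventually (gt_mem_nhds (show (0:ℝ) < ε / 3 by positivity)))
  refine ⟨max N0 1, fun n hn => ?_⟩
  have hn1 : 1 ≤ n := le_trans (le_max_right N0 1) hn
  have hnN0 : N0 ≤ n := le_trans (le_max_left N0 1) hn
  have hnpos : (0:ℝ) < n := by exact_mod_cast hn1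
  -- the upper bound function
  set G : Ω → ℝ := fun ω => a * (n : ℝ) ^ (p - 1) +
    (1 / (n : ℝ)) * ∑ i ∈ Finset.Icc 1 n,
      Set.indicator {ω | a < ‖X i ω‖ ^ p} (fun ω => ‖X i ω‖ ^ p) ω with hG
  have hGint : Integrable G P := by
    refine (integrable_const _).add (Integrable.const_mul ?_ _)
    exact integrable_finset_sum _ fun i _ => (hint i).indicator (hA i)
  -- pointwise bound
  have hpoint : ∀ ω, ((((Finset.Icc 1 n).sup fun k =>
      ‖∑ i ∈ Finset.Icc 1 k, X i ω‖₊ : NNReal) : ℝ) / (n : ℝ) ^ (1 / p)) ^ p ≤ G ω := by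
    intro ω
    set M : ℝ := (((Finset.Icc 1 n).sup fun k =>
      ‖∑ i ∈ Finset.Icc 1 k, X i ω‖₊ : NNReal) : ℝ) with hM
    have hMnn : 0 ≤ M := NNReal.coe_nonneg _
    -- M ≤ sum of norms
    have h1 : M ≤ ∑ i ∈ Finset.Icc 1 n, ‖X i ω‖ := by
      have : ((Finset.Icc 1 n).sup fun k => ‖∑ i ∈ Finset.Icc 1 k, X i ω‖₊)
          ≤ ∑ i ∈ Finset.Icc 1 n, ‖X i ω‖₊ := by
        refine Finset.sup_le fun k hk => ?_
        refine le_trans (nnnorm_sum_le _ _) ?_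
        exact Finset.sum_le_sum_of_subset
          (Finset.Icc_subset_Icc_right (Finset.mem_Icc.1 hk).2)
      calc M ≤ ((∑ i ∈ Finset.Icc 1 n, ‖X i ω‖₊ : NNReal) : ℝ) := by exact_mod_cast this
        _ = ∑ i ∈ Finset.Icc 1 n, ‖X i ω‖ := by push_cast; rfl
    -- truncate
    have h2 : ∑ i ∈ Finset.Icc 1 n, ‖X i ω‖ ≤ (n : ℝ) * c +
        ∑ i ∈ Finset.Icc 1 n, Set.indicator {ω | a < ‖X i ω‖ ^ p} (fun ω => ‖X i ω‖) ω := by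
      have : ∀ i ∈ Finset.Icc 1 n, ‖X i ω‖ ≤ c +
          Set.indicator {ω | a < ‖X i ω‖ ^ p} (fun ω => ‖X i ω‖) ω := by
        intro i _
        by_cases h : ω ∈ {ω | a < ‖X i ω‖ ^ p}
        · rw [Set.indicator_of_mem h]
          linarith
        · rw [Set.indicator_of_notMem h]
          have h' : ‖X i ω‖ ^ p ≤ a := le_of_not_gt h
          rw [← hcp] at h'
          rw [add_zero]
          exact (Real.rpow_le_rpow_iff (norm_nonneg _) hcpos.le hp0).1 h'
      calc ∑ i ∈ Finset.Icc 1 n, ‖X i ω‖ ≤ ∑ i ∈ Finset.Icc 1 n, (c +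
            Set.indicator {ω | a < ‖X i ω‖ ^ p} (fun ω => ‖X i ω‖) ω) :=
          Finset.sum_le_sum this
        _ = (n : ℝ) * c + _ := by
          rw [Finset.sum_add_distrib, Finset.sum_const, Nat.card_Icc]
          simp [nsmul_eq_mul]
    set U : ℝ := ∑ i ∈ Finset.Icc 1 n,
      Set.indicator {ω | a < ‖X i ω‖ ^ p} (fun ω => ‖X i ω‖) ω with hU
    have hUnn : 0 ≤ U := Finset.sum_nonneg fun i _ =>
      Set.indicator_nonneg (fun x _ => norm_nonneg _) _
    have hncnn : (0:ℝ) ≤ (n : ℝ) * c := by positivity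
    -- power bound
    have h3 : M ^ p ≤ ((n : ℝ) * c) ^ p + ∑ i ∈ Finset.Icc 1 n,
        Set.indicator {ω | a < ‖X i ω‖ ^ p} (fun ω => ‖X i ω‖ ^ p) ω := by
      have hMle : M ≤ (n : ℝ) * c + U := le_trans h1 h2
      have step1 : M ^ p ≤ ((n : ℝ) * c + U) ^ p :=
        Real.rpow_le_rpow hMnn hMle hp0.le
      have step2 : ((n : ℝ) * c + U) ^ p ≤ ((n : ℝ) * c) ^ p + U ^ p :=
        rpow_add_le_add_rpow_real hncnn hUnn hp0.le hp1.le
      have step3 : U ^ p ≤ ∑ i ∈ Finset.Icc 1 n,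
          (Set.indicator {ω | a < ‖X i ω‖ ^ p} (fun ω => ‖X i ω‖) ω) ^ p :=
        sum_rpow_le_rpow_sum hp0 hp1.le fun i _ =>
          Set.indicator_nonneg (fun x _ => norm_nonneg _) _
      have step4 : ∀ i, (Set.indicator {ω | a < ‖X i ω‖ ^ p} (fun ω => ‖X i ω‖) ω) ^ p =
          Set.indicator {ω | a < ‖X i ω‖ ^ p} (fun ω => ‖X i ω‖ ^ p) ω := by
        intro i
        by_cases h : ω ∈ {ω | a < ‖X i ω‖ ^ p}
        · rw [Set.indicator_of_mem h, Set.indicator_of_mem h]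
        · rw [Set.indicator_of_notMem h, Set.indicator_of_notMem h,
            Real.zero_rpow hpne]
      calc M ^ p ≤ ((n : ℝ) * c) ^ p + U ^ p := le_trans step1 step2
        _ ≤ ((n : ℝ) * c) ^ p + ∑ i ∈ Finset.Icc 1 n,
            (Set.indicator {ω | a < ‖X i ω‖ ^ p} (fun ω => ‖X i ω‖) ω) ^ p :=
          add_le_add_right step3 _
        _ = _ := by rw [Finset.sum_congr rfl fun i _ => step4 i]
    -- rewrite the normalized power
    have hdiv : (M / (n : ℝ) ^ (1 / p)) ^ p = M ^ p / n := by
      rw [Real.div_rpow hMnn (Real.rpow_nonneg (le_of_lt hnpos) _),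
        ← Real.rpow_mul (le_of_lt hnpos), one_div, inv_mul_cancel₀ hpne, Real.rpow_one]
    rw [hdiv, hG]
    have hnc : ((n : ℝ) * c) ^ p / n = a * (n : ℝ) ^ (p - 1) := by
      rw [Real.mul_rpow (le_of_lt hnpos) hcpos.le, hcp, Real.rpow_sub hnpos,
        Real.rpow_one]
      ring
    rw [div_le_iff₀ hnpos] at *
    calc M ^ p ≤ ((n : ℝ) * c) ^ p + ∑ i ∈ Finset.Icc 1 n,
          Set.indicator {ω | a < ‖X i ω‖ ^ p} (fun ω => ‖X i ω‖ ^ p) ω := h3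
      _ = (a * (n : ℝ) ^ (p - 1) + (1 / (n : ℝ)) * ∑ i ∈ Finset.Icc 1 n,
          Set.indicator {ω | a < ‖X i ω‖ ^ p} (fun ω => ‖X i ω‖ ^ p) ω) * n := by
        rw [add_mul]
        congr 1
        · rw [← hnc]; field_simp
        · field_simp
  -- integral bound
  have hFnn : ∀ ω, 0 ≤ ((((Finset.Icc 1 n).sup fun k =>
      ‖∑ i ∈ Finset.Icc 1 k, X i ω‖₊ : NNReal) : ℝ) / (n : ℝ) ^ (1 / p)) ^ p := fun ω =>
    Real.rpow_nonneg (div_nonneg (NNReal.coe_nonneg _)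
      (Real.rpow_nonneg (le_of_lt hnpos) _)) _
  have hIle : (∫ ω, ((((Finset.Icc 1 n).sup fun k =>
      ‖∑ i ∈ Finset.Icc 1 k, X i ω‖₊ : NNReal) : ℝ) / (n : ℝ) ^ (1 / p)) ^ p ∂P)
      ≤ ∫ ω, G ω ∂P :=
    integral_mono_of_nonneg (Filter.Eventually.of_forall hFnn) hGint
      (Filter.Eventually.of_forall hpoint)
  have hGval : (∫ ω, G ω ∂P) = a * (n : ℝ) ^ (p - 1) +
      (1 / (n : ℝ)) * ∑ i ∈ Finset.Icc 1 n,
        ∫ ω, Set.indicator {ω | a < ‖X i ω‖ ^ p} (fun ω => ‖X i ω‖ ^ p) ω ∂P := by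
    rw [hG]
    rw [integral_add (integrable_const _) (Integrable.const_mul
      (integrable_finset_sum _ fun i _ => (hint i).indicator (hA i)) _)]
    rw [integral_const, integral_const_mul,
      integral_finset_sum _ fun i _ => (hint i).indicator (hA i)]
    simp
  have htail : (1 / (n : ℝ)) * ∑ i ∈ Finset.Icc 1 n,
      ∫ ω, Set.indicator {ω | a < ‖X i ω‖ ^ p} (fun ω => ‖X i ω‖ ^ p) ω ∂P ≤ ε / 3 :=
    hbound a le_rfl n hn1
  have hfinal : (∫ ω, ((((Finset.Icc 1 n).sup fun k =>
      ‖∑ i ∈ Finset.Icc 1 k, X i ω‖₊ : NNReal) : ℝ) / (n : ℝ) ^ (1 / p)) ^ p ∂P) < ε := by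
    have := hN0 n hnN0
    calc (∫ ω, ((((Finset.Icc 1 n).sup fun k =>
        ‖∑ i ∈ Finset.Icc 1 k, X i ω‖₊ : NNReal) : ℝ) / (n : ℝ) ^ (1 / p)) ^ p ∂P)
        ≤ ∫ ω, G ω ∂P := hIle
      _ ≤ a * (n : ℝ) ^ (p - 1) + ε / 3 := by rw [hGval]; linarith
      _ < ε / 3 + ε / 3 := by linarith
      _ < ε := by linarith
  rw [Real.dist_eq, sub_zero, abs_of_nonneg (integral_nonneg hFnn)]
  exact hfinal
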